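/- The smallest class of groups X containing all finitely generated free groups and all amenable groups and closed under directed unions and group extensions is closed under taking subgroups. -/

import Mathlib

/-- A class of groups. -/
def GroupClass : Type 1 := (G : Type) → [inst : Group G] → Prop

/-- A group is amenable if it admits a left-invariant finitely additive
probability measure on all subsets. -/
def Amenable (G : Type) [Group G] : Prop :=
  ∃ m : Set G → ℝ,
    (∀ s, 0 ≤ m s) ∧ m Set.univ = 1 ∧
    (∀ s t : Set G, Disjoint s t → m (s ∪ t) = m s + m t) ∧
    (∀ (g : G) (s : Set G), m ((g * ·) '' s) = m s)

/-- The class `A` of finitely generated free groups and amenable groups. -/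
def classA : GroupClass := fun G [Group G] =>
  (∃ n : ℕ, Nonempty (G ≃* FreeGroup (Fin n))) ∨ Amenable G

/-- `Loc Y`: groups all of whose finite subsets lie in a `Y`-subgroup. -/
def Loc (Y : GroupClass) : GroupClass := fun G [Group G] =>
  ∀ s : Finset G, ∃ H : Subgroup G, (∀ x ∈ s, x ∈ H) ∧ Y H

/-- `Y·Z`: groups with a normal subgroup in `Y` and quotient in `Z`. -/
def classMul (Y Z : GroupClass) : GroupClass := fun G [Group G] =>
  ∃ H : Subgroup G, ∃ hn : H.Normal,
    Y H ∧ (letI : H.Normal := hn; Z (G ⧸ H))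

/-- The transfinite hierarchy `X_a`: `X_0 = {1}`, `X_{a+1} = Loc(X_a · A)`,
and unions at limit ordinals. -/
def Xcl (A : GroupClass) : Ordinal → GroupClass := fun a =>
  Ordinal.limitRecOn a
    (fun (G : Type) [Group G] => Subsingleton G)
    (fun _ X' => Loc (classMul X' A))
    (fun a _ IH => fun (G : Type) [Group G] => ∃ b, ∃ hb : b < a, IH b hb G)

/-- `C` is closed under directed unions. -/
def DirectedUnionClosed (C : GroupClass) : Prop :=
  ∀ (G : Type) [Group G] (ι : Type) (f : ι → Subgroup G),
    Directed (· ≤ ·) f → (∀ i, C (f i)) → (⨆ i, f i) = ⊤ → C G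

/-- `C` is closed under extensions. -/
def ExtensionClosed (C : GroupClass) : Prop :=
  ∀ (G : Type) [Group G] (H : Subgroup G) (hn : H.Normal),
    C H → (letI : H.Normal := hn; C (G ⧸ H)) → C G

/-- `C` contains the class `A`. -/
def Contains (A C : GroupClass) : Prop := ∀ (G : Type) [Group G], A G → C G

/-- The smallest class of groups containing `A` which is closed under directed
unions and extensions. -/
def smallestX (A : GroupClass) : GroupClass := fun (G : Type) [Group G] =>
  ∀ C : GroupClass, Contains A C → DirectedUnionClosed C → ExtensionClosed C → C G

/-! ### Auxiliary lemmas -/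

theorem smallestX_contains (A : GroupClass) : Contains A (smallestX A) :=
  fun G _ hG C hA _ _ => hA G hG

theorem smallestX_dirClosed (A : GroupClass) : DirectedUnionClosed (smallestX A) :=
  fun G _ ι f hdir hmem htop C hA hU hE =>
    hU G ι f hdir (fun i => hmem i C hA hU hE) htop

theorem smallestX_extClosed (A : GroupClass) : ExtensionClosed (smallestX A) := by
  intro G _ H hn hH hQ C hA hU hE
  exact hE G H hn (hH C hA hU hE) (hQ C hA hU hE)

theorem amenable_iso {G K : Type} [Group G] [Group K] (e : G ≃* K) (h : Amenable G) :
    Amenable K := by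
  obtain ⟨m, h0, h1, hadd, hinv⟩ := h
  refine ⟨fun s => m (⇑e ⁻¹' s), fun s => h0 _, by simpa using h1, ?_, ?_⟩
  · intro s t hst
    show m (⇑e ⁻¹' (s ∪ t)) = m (⇑e ⁻¹' s) + m (⇑e ⁻¹' t)
    rw [Set.preimage_union]
    exact hadd _ _ (hst.preimage _)
  · intro k s
    show m (⇑e ⁻¹' ((k * ·) '' s)) = m (⇑e ⁻¹' s)
    have key : ⇑e ⁻¹' ((k * ·) '' s) = (e.symm k * ·) '' (⇑e ⁻¹' s) := by
      ext g
      simp only [Set.mem_preimage, Set.mem_image]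
      constructor
      · rintro ⟨a, ha, hak⟩
        refine ⟨e.symm a, by simpa using ha, ?_⟩
        have : e.symm (k * a) = e.symm (e g) := by rw [hak]
        simpa [map_mul] using this
      · rintro ⟨a, ha, rfl⟩
        exact ⟨e a, ha, by simp [map_mul]⟩
    rw [key, hinv]

theorem amenable_subgroup {G : Type} [Group G] (h : Amenable G) (H : Subgroup G) :
    Amenable ↥H := by
  obtain ⟨m, h0, h1, hadd, hinv⟩ := h
  let r : G → G := fun g => (Quotient.mk (QuotientGroup.rightRel H) g).out
  have hr : ∀ g, g * (r g)⁻¹ ∈ H := by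
    intro g
    have : Quotient.mk (QuotientGroup.rightRel H) (r g) = Quotient.mk _ g := Quotient.out_eq _
    exact (QuotientGroup.rightRel_apply).1 (Quotient.exact this)
  have hrH : ∀ (h : ↥H) (g : G), r (↑h * g) = r g := by
    intro h g
    have : Quotient.mk (QuotientGroup.rightRel H) (↑h * g) = Quotient.mk _ g := by
      apply Quotient.sound
      have : g * (↑h * g)⁻¹ ∈ H := by simpa [mul_assoc] using H.inv_mem h.2
      exact QuotientGroup.rightRel_apply.mpr this
    simp only [r, this]
  let π : G → ↥H := fun g => ⟨g * (r g)⁻¹, hr g⟩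
  have hπ : ∀ (h : ↥H) (g : G), π (↑h * g) = h * π g := by
    intro h g
    ext
    simp [π, hrH, mul_assoc]
  refine ⟨fun A => m (π ⁻¹' A), fun A => h0 _, by simpa using h1, ?_, ?_⟩
  · intro s t hst
    show m (π ⁻¹' (s ∪ t)) = m (π ⁻¹' s) + m (π ⁻¹' t)
    rw [Set.preimage_union]
    exact hadd _ _ (hst.preimage _)
  · intro h A
    show m (π ⁻¹' ((h * ·) '' A)) = m (π ⁻¹' A)
    have key : π ⁻¹' ((h * ·) '' A) = ((↑h : G) * ·) '' (π ⁻¹' A) := by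
      ext g
      simp only [Set.mem_preimage, Set.mem_image]
      constructor
      · rintro ⟨a, ha, hak⟩
        refine ⟨(↑h)⁻¹ * g, ?_, by simp⟩
        have : π ((↑(h⁻¹) : G) * g) = h⁻¹ * π g := hπ h⁻¹ g
        show π ((↑h : G)⁻¹ * g) ∈ A
        rw [show ((↑h : G)⁻¹ : G) = (↑(h⁻¹) : G) by simp, this, ← hak]
        simpa using ha
      · rintro ⟨a, ha, rfl⟩
        exact ⟨π a, ha, (hπ h a).symm⟩
    rw [key, hinv]

theorem classA_iso {G K : Type} [Group G] [Group K] (e : G ≃* K) (h : classA G) : classA K := by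
  rcases h with ⟨n, ⟨f⟩⟩ | h
  · exact Or.inl ⟨n, ⟨e.symm.trans f⟩⟩
  · exact Or.inr (amenable_iso e h)

theorem smallestX_iso {G K : Type} [Group G] [Group K] (e : G ≃* K)
    (h : smallestX classA G) : smallestX classA K := by
  intro C hA hU hE
  have key := h (fun G' _ => ∀ (K' : Type) [Group K'], (G' ≃* K') → C K') ?_ ?_ ?_
  · exact key K e
  · intro G' _ hG' K' _ e'
    exact hA K' (classA_iso e' hG')
  · intro G' _ ι f hdir hmem htop K' _ e'
    refine hU K' ι (fun i => (f i).map e'.toMonoidHom) ?_ ?_ ?_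
    · intro i j
      obtain ⟨k, hik, hjk⟩ := hdir i j
      exact ⟨k, Subgroup.map_mono hik, Subgroup.map_mono hjk⟩
    · intro i
      exact hmem i _ (e'.subgroupMap (f i))
    · rw [← Subgroup.map_iSup, htop, Subgroup.map_top_of_surjective _ e'.surjective]
  · intro G' _ N hn hN hQ K' _ e'
    letI := hn
    haveI hnm : (N.map e'.toMonoidHom).Normal := hn.map _ e'.surjective
    refine hE K' (N.map e'.toMonoidHom) hnm ?_ ?_
    · exact hN _ (e'.subgroupMap N)
    · exact hQ _ (QuotientGroup.congr N (N.map e'.toMonoidHom) e' rfl)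

theorem smallestX_freeGroup (S : Type) : smallestX classA (FreeGroup S) := by
  classical
  have inj : ∀ T : Finset S, Function.Injective
      (FreeGroup.map (Subtype.val : {x : S // x ∈ T} → S)) := by
    intro T
    have hli : Function.LeftInverse
        (FreeGroup.lift (fun s : S =>
          if h : s ∈ T then FreeGroup.of (⟨s, h⟩ : {x : S // x ∈ T}) else 1))
        (FreeGroup.map (Subtype.val : {x : S // x ∈ T} → S)) := by
      intro x
      induction x using FreeGroup.induction_on with
      | C1 => simp
      | of s =>
        show FreeGroup.lift _ (FreeGroup.map _ (FreeGroup.of s)) = FreeGroup.of s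
        rw [FreeGroup.map.of, FreeGroup.lift_apply_of, dif_pos s.2]
      | inv_of s ih => simp only [map_inv, ih]
      | mul x y hx hy => simp only [map_mul, hx, hy]
    exact hli.injective
  intro C hA hU hE
  refine hU (FreeGroup S) (Finset S)
    (fun T => (FreeGroup.map (Subtype.val : {x : S // x ∈ T} → S)).range) ?_ ?_ ?_
  · have mono : ∀ {T T' : Finset S}, T ⊆ T' →
        (FreeGroup.map (Subtype.val : {x : S // x ∈ T} → S)).range ≤
        (FreeGroup.map (Subtype.val : {x : S // x ∈ T'} → S)).range := by
      intro T T' hTT'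
      rintro x ⟨y, rfl⟩
      refine ⟨FreeGroup.map (fun t : {x : S // x ∈ T} =>
        (⟨t.1, hTT' t.2⟩ : {x : S // x ∈ T'})) y, ?_⟩
      have hc : (FreeGroup.map (Subtype.val : {x : S // x ∈ T'} → S)).comp
          (FreeGroup.map (fun t : {x : S // x ∈ T} => (⟨t.1, hTT' t.2⟩ : {x : S // x ∈ T'}))) =
          FreeGroup.map (Subtype.val : {x : S // x ∈ T} → S) := by
        apply FreeGroup.ext_hom
        intro a
        simp [FreeGroup.map.of]
      calc (FreeGroup.map (Subtype.val : {x : S // x ∈ T'} → S))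
            ((FreeGroup.map (fun t : {x : S // x ∈ T} =>
              (⟨t.1, hTT' t.2⟩ : {x : S // x ∈ T'}))) y)
          = ((FreeGroup.map (Subtype.val : {x : S // x ∈ T'} → S)).comp
              (FreeGroup.map (fun t : {x : S // x ∈ T} =>
                (⟨t.1, hTT' t.2⟩ : {x : S // x ∈ T'})))) y := rfl
        _ = FreeGroup.map (Subtype.val : {x : S // x ∈ T} → S) y := by rw [hc]
    intro T T'
    exact ⟨T ∪ T', mono Finset.subset_union_left, mono Finset.subset_union_right⟩
  · intro T
    refine hA _ (Or.inl ⟨T.card, ⟨?_⟩⟩)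
    exact (MonoidHom.ofInjective (inj T)).symm.trans (FreeGroup.freeGroupCongr T.equivFin)
  · rw [eq_top_iff]
    intro x hx
    clear hx
    induction x using FreeGroup.induction_on with
    | C1 => exact Subgroup.one_mem _
    | of s =>
      refine Subgroup.mem_iSup_of_mem {s} ?_
      exact ⟨FreeGroup.of (⟨s, Finset.mem_singleton_self s⟩ :
        {x : S // x ∈ ({s} : Finset S)}), by rw [FreeGroup.map.of]⟩
    | inv_of s ih => exact Subgroup.inv_mem _ ih
    | mul x y hx hy => exact Subgroup.mul_mem _ hx hy

/-- the smallest class of groups containing all finitely generated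
free groups and all amenable groups and closed under directed unions and
extensions is closed under taking subgroups. -/
theorem stmt9 (G : Type) [Group G] (hG : smallestX classA G) (H : Subgroup G) :
    smallestX classA H := by
  have key := hG (fun G' _ => ∀ H' : Subgroup G', smallestX classA ↥H') ?_ ?_ ?_
  · exact key H
  · -- Contains
    intro G' _ hG' H'
    rcases hG' with ⟨n, ⟨e⟩⟩ | ham
    · have h1 : smallestX classA ↥(H'.map e.toMonoidHom) := by
        exact smallestX_iso (IsFreeGroup.toFreeGroup ↥(H'.map e.toMonoidHom)).symm
          (smallestX_freeGroup _)
      exact smallestX_iso (e.subgroupMap H').symm h1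
    · exact smallestX_contains classA ↥H' (Or.inr (amenable_subgroup ham H'))
  · -- directed unions
    intro G' _ ι f hdir hmem htop H'
    refine smallestX_dirClosed classA ↥H' ι (fun i => (f i).subgroupOf H') ?_ ?_ ?_
    · intro i j
      obtain ⟨k, hik, hjk⟩ := hdir i j
      exact ⟨k, Subgroup.comap_mono hik, Subgroup.comap_mono hjk⟩
    · intro i
      have heq : (f i).subgroupOf H' = (H' ⊓ f i).subgroupOf H' := by
        ext x
        simp [Subgroup.mem_subgroupOf, x.2]
      have e1 : ↥((H' ⊓ f i).subgroupOf (f i)) ≃* ↥(H' ⊓ f i) :=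
        Subgroup.subgroupOfEquivOfLe inf_le_right
      have e2 : ↥((H' ⊓ f i).subgroupOf H') ≃* ↥(H' ⊓ f i) :=
        Subgroup.subgroupOfEquivOfLe inf_le_left
      show smallestX classA ↥((f i).subgroupOf H')
      rw [heq]
      exact smallestX_iso (e1.trans e2.symm) (hmem i _)
    · rw [eq_top_iff]
      intro x _
      have hx : (x : G') ∈ ⨆ i, f i := htop ▸ Subgroup.mem_top _
      cases isEmpty_or_nonempty ι with
      | inl hempty =>
        have hbot : (⨆ i, f i) = (⊥ : Subgroup G') := by
          rw [iSup_of_empty]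
        rw [hbot] at hx
        have hx1 : x = 1 := Subtype.ext (Subgroup.mem_bot.1 hx)
        rw [hx1]
        exact Subgroup.one_mem _
      | inr hne =>
        obtain ⟨i, hi⟩ := (Subgroup.mem_iSup_of_directed hdir).1 hx
        exact Subgroup.mem_iSup_of_mem i (Subgroup.mem_subgroupOf.2 hi)
  · -- extensions
    intro G' _ N hn hN hQ H'
    letI := hn
    haveI hnorm : (N.subgroupOf H').Normal := Subgroup.normal_subgroupOf
    refine smallestX_extClosed classA ↥H' (N.subgroupOf H') hnorm ?_ ?_
    · have heq : N.subgroupOf H' = (H' ⊓ N).subgroupOf H' := by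
        ext x
        simp [Subgroup.mem_subgroupOf, x.2]
      have e1 : ↥((H' ⊓ N).subgroupOf H') ≃* ↥(H' ⊓ N) :=
        Subgroup.subgroupOfEquivOfLe inf_le_left
      have e2 : ↥((H' ⊓ N).subgroupOf N) ≃* ↥(H' ⊓ N) :=
        Subgroup.subgroupOfEquivOfLe inf_le_right
      rw [heq]
      exact smallestX_iso (e2.trans e1.symm) (hN _)
    · have hker : ((QuotientGroup.mk' N).comp H'.subtype).ker = N.subgroupOf H' := by
        ext x
        simp [MonoidHom.mem_ker, QuotientGroup.eq_one_iff, Subgroup.mem_subgroupOf]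
      have e3 : (↥H' ⧸ N.subgroupOf H') ≃*
          ((QuotientGroup.mk' N).comp H'.subtype).range :=
        (QuotientGroup.quotientMulEquivOfEq hker.symm).trans
          (QuotientGroup.quotientKerEquivRange _)
      exact smallestX_iso e3.symm (hQ _)
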